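/- arXiv:1509.07624 — 2 statements merged into one kernel-verified Lean document; each statement's English description precedes it below -/
import Mathlib

section
/- The raising relation (d/dr - m/r) Q_n^{k,m}(r) = 2√(n(n+k+m+1)) Q_{n-1}^{k+1,m+1}(r) holds for r ∈ (0,1). -/
set_option maxHeartbeats 1000000


/-- The Jacobi polynomial `P_n^{(a,b)}(x)`. -/
noncomputable def jacobiP (n : ℕ) (a b : ℝ) (x : ℝ) : ℝ :=
  (1 / 2 ^ n) * ∑ s ∈ Finset.range (n + 1),
    (Real.Gamma (a + n + 1) / (Real.Gamma (a + n - s + 1) * (Nat.factorial s))) *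
    (Real.Gamma (b + n + 1) / (Real.Gamma (b + s + 1) * (Nat.factorial (n - s)))) *
    (x - 1) ^ (n - s) * (x + 1) ^ s
/-- The Jacobi orthogonality normalization `W_n^{a,b}`. -/
noncomputable def Wnorm (n : ℕ) (a b : ℝ) : ℝ :=
  2 ^ (a + b + 1) / (2 * n + a + b + 1) *
    (Real.Gamma (n + a + 1) * Real.Gamma (n + b + 1) /
      (Real.Gamma (n + a + b + 1) * (Nat.factorial n)))

/-- The normalization `N_n^{k,m} = W_n^{k,m} / 2^{2+k+m}`. -/
noncomputable def Nnorm (n k m : ℕ) : ℝ := Wnorm n k m / 2 ^ (2 + k + m)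

/-- The radial basis element `Q_n^{k,m}(r)`. -/
noncomputable def Q (n k m : ℕ) (r : ℝ) : ℝ :=
  r ^ m * jacobiP n k m (2 * r ^ 2 - 1) / Real.sqrt (Nnorm n k m)

lemma jacobiP_hasDerivAt (N : ℕ) (a b : ℝ) (ha : 0 ≤ a) (hb : 0 ≤ b) (x : ℝ) :
    HasDerivAt (fun y => jacobiP (N+1) a b y)
      ((a + b + (N+1:ℕ) + 1) / 2 * jacobiP N (a+1) (b+1) x) x := by
  set C : ℕ → ℝ := fun s =>
    (Real.Gamma (a + (N+1:ℕ) + 1) / (Real.Gamma (a + (N+1:ℕ) - s + 1) * (Nat.factorial s))) *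
    (Real.Gamma (b + (N+1:ℕ) + 1) / (Real.Gamma (b + s + 1) * (Nat.factorial (N+1 - s)))) with hC
  have key : ∀ s : ℕ, HasDerivAt (fun y : ℝ => C s * (y - 1) ^ (N+1 - s) * (y + 1) ^ s)
      (C s * (((N+1-s : ℕ) : ℝ) * (x - 1) ^ (N - s) * (x + 1) ^ s
        + (x - 1) ^ (N+1 - s) * ((s:ℝ) * (x + 1) ^ (s-1)))) x := by
    intro s
    have h1 : HasDerivAt (fun y : ℝ => (y - 1) ^ (N+1 - s))
        ((↑(N+1-s) : ℝ) * (x - 1) ^ (N+1-s-1) * 1) x :=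
      (((hasDerivAt_id x).sub_const 1).pow _)
    have h2 : HasDerivAt (fun y : ℝ => (y + 1) ^ s)
        ((s : ℝ) * (x + 1) ^ (s-1) * 1) x :=
      (((hasDerivAt_id x).add_const 1).pow _)
    have h3 := (h1.mul h2).const_mul (C s)
    have hexp : N + 1 - s - 1 = N - s := by omega
    have e : (fun y : ℝ => C s * (y - 1) ^ (N+1 - s) * (y + 1) ^ s) = (fun y => C s * (((fun y : ℝ => (y - 1) ^ (N + 1 - s)) * fun y : ℝ => (y + 1) ^ s) : ℝ → ℝ) y) := by
      funext y; simp only [Pi.mul_apply]; ring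
    rw [e]; refine h3.congr_deriv ?_
    rw [hexp]; ring
  have hsum := (HasDerivAt.fun_sum (u := Finset.range (N+2)) (fun s _ => key s)).const_mul
    ((1:ℝ) / 2 ^ (N+1))
  have e : (fun y => jacobiP (N+1) a b y) = fun y => 1 / 2 ^ (N + 1) * ∑ i ∈ Finset.range (N + 2), C i * (y - 1) ^ (N + 1 - i) * (y + 1) ^ i := by
    funext y; rfl
  rw [e]; refine hsum.congr_deriv ?_; symm
  -- value equality
  have hc : ∀ i : ℕ, i ≤ N →
      C i * ((N+1-i : ℕ) : ℝ) + C (i+1) * ((i+1 : ℕ) : ℝ) =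
      (a + b + (N:ℝ) + 2) *
        ((Real.Gamma (a + 1 + N + 1) / (Real.Gamma (a + 1 + N - i + 1) * (Nat.factorial i))) *
         (Real.Gamma (b + 1 + N + 1) / (Real.Gamma (b + 1 + i + 1) * (Nat.factorial (N - i))))) := by
    intro i hiN
    have hle : (i:ℝ) ≤ (N:ℝ) := Nat.cast_le.mpr hiN
    have harg1 : (0:ℝ) < a + ↑N - ↑i + 1 := by linarith
    have harg2 : (0:ℝ) < b + ↑i + 1 := by positivity
    have hApos : 0 < Real.Gamma (a + ↑N - ↑i + 1) := Real.Gamma_pos_of_pos harg1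
    have hBpos : 0 < Real.Gamma (b + ↑i + 1) := Real.Gamma_pos_of_pos harg2
    have g1 : Real.Gamma (a + ((N+1:ℕ):ℝ) - ↑i + 1)
        = (a + ↑N - ↑i + 1) * Real.Gamma (a + ↑N - ↑i + 1) := by
      rw [show a + ((N+1:ℕ):ℝ) - ↑i + 1 = (a + ↑N - ↑i + 1) + 1 by push_cast; ring,
        Real.Gamma_add_one (by linarith)]
    have g2 : Real.Gamma (a + ((N+1:ℕ):ℝ) - ((i+1:ℕ):ℝ) + 1) = Real.Gamma (a + ↑N - ↑i + 1) := by
      congr 1; push_cast; ring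
    have g3 : Real.Gamma (b + ((i+1:ℕ):ℝ) + 1) = (b + ↑i + 1) * Real.Gamma (b + ↑i + 1) := by
      rw [show b + ((i+1:ℕ):ℝ) + 1 = (b + ↑i + 1) + 1 by push_cast; ring,
        Real.Gamma_add_one (by linarith)]
    have g4 : Real.Gamma (a + ((N+1:ℕ):ℝ) + 1) = Real.Gamma (a + 1 + ↑N + 1) := by
      congr 1; push_cast; ring
    have g5 : Real.Gamma (b + ((N+1:ℕ):ℝ) + 1) = Real.Gamma (b + 1 + ↑N + 1) := by
      congr 1; push_cast; ring
    have g6 : Real.Gamma (a + 1 + ↑N - ↑i + 1) = (a + ↑N - ↑i + 1) * Real.Gamma (a + ↑N - ↑i + 1) := by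
      rw [show a + 1 + (N:ℝ) - ↑i + 1 = (a + ↑N - ↑i + 1) + 1 by ring,
        Real.Gamma_add_one (by linarith)]
    have g7 : Real.Gamma (b + 1 + ↑i + 1) = (b + ↑i + 1) * Real.Gamma (b + ↑i + 1) := by
      rw [show b + 1 + (i:ℝ) + 1 = (b + ↑i + 1) + 1 by ring,
        Real.Gamma_add_one (by linarith)]
    have e0 : N + 1 - (i+1) = N - i := by omega
    have e1 : N + 1 - i = (N - i) + 1 := by omega
    simp only [hC, g1, g2, g3, g4, g5, g6, g7, e0, e1, Nat.factorial_succ]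
    have hf1 : (Nat.factorial i : ℝ) ≠ 0 := Nat.cast_ne_zero.mpr (Nat.factorial_ne_zero i)
    have hf2 : (Nat.factorial (N-i) : ℝ) ≠ 0 := Nat.cast_ne_zero.mpr (Nat.factorial_ne_zero _)
    push_cast [Nat.cast_sub hiN]
    have h1 : (0:ℝ) < (N:ℝ) - ↑i + 1 := by linarith
    have h2 : (0:ℝ) < (i:ℝ) + 1 := by positivity
    field_simp [hApos.ne', hBpos.ne', harg1.ne', harg2.ne', h1.ne', h2.ne', hf1, hf2]
    ring
  -- now the sum manipulation
  have split : (∑ i ∈ Finset.range (N+2),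
      C i * (((N+1-i : ℕ) : ℝ) * (x - 1) ^ (N - i) * (x + 1) ^ i
        + (x - 1) ^ (N+1 - i) * ((i:ℝ) * (x + 1) ^ (i-1)))) =
      (a + b + (N:ℝ) + 2) * ∑ i ∈ Finset.range (N+1),
        (Real.Gamma (a + 1 + N + 1) / (Real.Gamma (a + 1 + N - i + 1) * (Nat.factorial i))) *
        (Real.Gamma (b + 1 + N + 1) / (Real.Gamma (b + 1 + i + 1) * (Nat.factorial (N - i)))) *
        (x - 1) ^ (N - i) * (x + 1) ^ i := by
    have step1 : (∑ i ∈ Finset.range (N+2),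
        C i * (((N+1-i : ℕ) : ℝ) * (x - 1) ^ (N - i) * (x + 1) ^ i
          + (x - 1) ^ (N+1 - i) * ((i:ℝ) * (x + 1) ^ (i-1)))) =
        (∑ i ∈ Finset.range (N+2), C i * ((N+1-i : ℕ) : ℝ) * (x - 1) ^ (N - i) * (x + 1) ^ i)
        + ∑ i ∈ Finset.range (N+2), C i * (i:ℝ) * (x - 1) ^ (N+1-i) * (x + 1) ^ (i-1) := by
      rw [← Finset.sum_add_distrib]
      exact Finset.sum_congr rfl (fun i _ => by ring)
    rw [step1, Finset.sum_range_succ (n := N+1), Finset.sum_range_succ' _ (N+1)]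
    simp only [Nat.sub_self, Nat.cast_zero, Nat.succ_sub_succ, Nat.add_sub_cancel, mul_zero,
      zero_mul, add_zero, Nat.cast_ofNat, CharP.cast_eq_zero]
    rw [← Finset.sum_add_distrib, Finset.mul_sum]
    refine Finset.sum_congr rfl (fun i hi => ?_)
    have hiN : i ≤ N := Finset.mem_range_succ_iff.mp hi
    have hci := hc i hiN
    push_cast at hci ⊢
    simp only [Nat.sub_zero]
    linear_combination ((x-1)^(N-i) * (x+1)^i) * hci
  rw [jacobiP, split]
  push_cast
  ring
lemma Nnorm_pos (n k m : ℕ) : 0 < Nnorm n k m := by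
  have h1 : 0 < Real.Gamma ((n:ℝ) + k + 1) := Real.Gamma_pos_of_pos (by positivity)
  have h2 : 0 < Real.Gamma ((n:ℝ) + m + 1) := Real.Gamma_pos_of_pos (by positivity)
  have h3 : 0 < Real.Gamma ((n:ℝ) + k + m + 1) := Real.Gamma_pos_of_pos (by positivity)
  have h4 : (0:ℝ) < Nat.factorial n := by positivity
  have h5 : (0:ℝ) < 2 * n + k + m + 1 := by positivity
  have h6 : (0:ℝ) < (2:ℝ) ^ ((k:ℝ) + m + 1) := Real.rpow_pos_of_pos two_pos _
  unfold Nnorm Wnorm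
  positivity

lemma Nnorm_rel (p k m : ℕ) :
    ((p:ℝ) + 1 + k + m + 1) * Nnorm p (k+1) (m+1) = ((p:ℝ)+1) * Nnorm (p+1) k m := by
  unfold Nnorm Wnorm
  have ga : Real.Gamma ((p:ℝ) + ((k:ℕ)+1:ℕ) + 1) = Real.Gamma ((((p:ℕ)+1:ℕ):ℝ) + k + 1) := by
    congr 1; push_cast; ring
  have gb : Real.Gamma ((p:ℝ) + ((m:ℕ)+1:ℕ) + 1) = Real.Gamma ((((p:ℕ)+1:ℕ):ℝ) + m + 1) := by
    congr 1; push_cast; ring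
  have hGpos : 0 < Real.Gamma (((p:ℕ)+1:ℕ) + (k:ℝ) + m + 1) := by
    apply Real.Gamma_pos_of_pos; positivity
  have gc : Real.Gamma ((p:ℝ) + ((k:ℕ)+1:ℕ) + ((m:ℕ)+1:ℕ) + 1)
      = ((((p:ℕ)+1:ℕ):ℝ) + k + m + 1) * Real.Gamma (((p:ℕ)+1:ℕ) + (k:ℝ) + m + 1) := by
    rw [show (p:ℝ) + ((k:ℕ)+1:ℕ) + ((m:ℕ)+1:ℕ) + 1 = ((((p:ℕ)+1:ℕ):ℝ) + k + m + 1) + 1 by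
      push_cast; ring, Real.Gamma_add_one (by push_cast; positivity)]
  have hrp : (2:ℝ) ^ ((((k:ℕ)+1:ℕ):ℝ) + (((m:ℕ)+1:ℕ):ℝ) + 1)
      = 4 * 2 ^ ((k:ℝ) + m + 1) := by
    rw [show ((((k:ℕ)+1:ℕ):ℝ) + (((m:ℕ)+1:ℕ):ℝ) + 1) = ((k:ℝ) + m + 1) + 2 by push_cast; ring,
      Real.rpow_add two_pos, show ((2:ℝ):ℝ) = ((2:ℕ):ℝ) by norm_num, Real.rpow_natCast]
    norm_num
    try ring
  have hnp : ((2:ℝ)) ^ (2 + (k+1) + (m+1)) = 2 ^ (2 + k + m) * 4 := by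
    rw [show 2 + (k+1) + (m+1) = (2 + k + m) + 2 by omega, pow_add]
    norm_num
  have hfact : ((Nat.factorial (p+1) : ℕ) : ℝ) = ((p:ℝ)+1) * Nat.factorial p := by
    rw [Nat.factorial_succ]; push_cast; ring
  rw [ga, gb, gc, hrp, hnp, hfact]
  have d1 : (0:ℝ) < 2 * ((p:ℕ):ℝ) + ((k:ℕ)+1:ℕ) + ((m:ℕ)+1:ℕ) + 1 := by positivity
  have d2 : (0:ℝ) < 2 * (((p:ℕ)+1:ℕ):ℝ) + k + m + 1 := by positivity
  have d3 : (0:ℝ) < (2:ℝ) ^ ((k:ℝ) + m + 1) := Real.rpow_pos_of_pos two_pos _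
  have d4 : (0:ℝ) < (2:ℝ) ^ (2 + k + m) := by positivity
  have d5 : (0:ℝ) < (Nat.factorial p : ℝ) := by positivity
  have heq : (2 * ((p:ℕ):ℝ) + ((k:ℕ)+1:ℕ) + ((m:ℕ)+1:ℕ) + 1)
      = 2 * (((p:ℕ)+1:ℕ):ℝ) + k + m + 1 := by push_cast; ring
  rw [heq]
  push_cast
  field_simp

theorem Q_raising (k m n : ℕ) (hn : 1 ≤ n) (r : ℝ) (hr : r ∈ Set.Ioo (0:ℝ) 1) :
    deriv (Q n k m) r - ((m : ℝ) / r) * Q n k m r =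
      2 * Real.sqrt ((n : ℝ) * (n + k + m + 1)) * Q (n - 1) (k + 1) (m + 1) r := by
  obtain ⟨hr0, hr1⟩ := hr
  obtain ⟨p, rfl⟩ : ∃ p, n = p + 1 := ⟨n - 1, by omega⟩
  simp only [Nat.add_sub_cancel]
  set y : ℝ := 2 * r ^ 2 - 1 with hy
  -- derivative of Q
  have h0 : HasDerivAt (fun t : ℝ => 2 * t ^ 2 - 1) (4 * r) r := by
    have := ((hasDerivAt_pow 2 r).const_mul (2:ℝ)).sub_const 1
    refine this.congr_deriv ?_
    norm_num; ring
  have hder := (jacobiP_hasDerivAt p k m (by positivity) (by positivity) y).comp r h0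
  have hpow : HasDerivAt (fun t : ℝ => t ^ m) ((m:ℝ) * r ^ (m-1)) r := by
    simpa using hasDerivAt_pow m r
  have hQ : HasDerivAt (Q (p+1) k m)
      (((m:ℝ) * r ^ (m-1) * jacobiP (p+1) k m y
        + r ^ m * (((k:ℝ) + m + (p+1:ℕ) + 1) / 2 * jacobiP p ((k:ℝ)+1) ((m:ℝ)+1) y * (4 * r)))
        / Real.sqrt (Nnorm (p+1) k m)) r := by
    exact (hpow.mul hder).div_const _
  rw [hQ.deriv]
  -- cast cleanup for Q p (k+1) (m+1)
  have hcast1 : ((k+1:ℕ):ℝ) = (k:ℝ) + 1 := by push_cast; ring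
  have hcast2 : ((m+1:ℕ):ℝ) = (m:ℝ) + 1 := by push_cast; ring
  have hQp : Q p (k+1) (m+1) r = r ^ (m+1) * jacobiP p ((k:ℝ)+1) ((m:ℝ)+1) y
      / Real.sqrt (Nnorm p (k+1) (m+1)) := by
    rw [Q, hcast1, hcast2]
  rw [Q, hQp]
  -- cancel the m-terms
  have hm : (m:ℝ) * r ^ (m-1) = (m:ℝ) / r * r ^ m := by
    cases m with
    | zero => simp
    | succ q =>
      simp only [Nat.add_sub_cancel, pow_succ]
      field_simp
  -- key sqrt identity
  have hN1 := Nnorm_pos (p+1) k m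
  have hN2 := Nnorm_pos p (k+1) (m+1)
  have hs1 : (0:ℝ) < Real.sqrt (Nnorm (p+1) k m) := Real.sqrt_pos.mpr hN1
  have hs2 : (0:ℝ) < Real.sqrt (Nnorm p (k+1) (m+1)) := Real.sqrt_pos.mpr hN2
  have key2 : ((k:ℝ) + m + (p+1:ℕ) + 1) * Real.sqrt (Nnorm p (k+1) (m+1))
      = Real.sqrt (((p+1:ℕ):ℝ) * (((p+1:ℕ):ℝ) + k + m + 1)) * Real.sqrt (Nnorm (p+1) k m) := by
    rw [← Real.sqrt_mul (by positivity) (Nnorm (p+1) k m)]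
    rw [show ((k:ℝ) + m + (p+1:ℕ) + 1) = Real.sqrt (((k:ℝ) + m + (p+1:ℕ) + 1)^2) by
      rw [Real.sqrt_sq (by positivity)]]
    rw [← Real.sqrt_mul (by positivity)]
    congr 1
    have := Nnorm_rel p k m
    push_cast at this ⊢
    nlinarith [this]
  -- final algebra
  rw [hm]
  push_cast at key2 ⊢
  simp only [← hy]
  have key2' : ((k:ℝ) + ↑m + ((p:ℝ) + 1) + 1) * Real.sqrt (Nnorm p (k+1) (m+1))
      = Real.sqrt ((p:ℝ)+1) * Real.sqrt ((p:ℝ)+1+↑k+↑m+1) * Real.sqrt (Nnorm (p+1) k m) := by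
    rw [← Real.sqrt_mul (by positivity)]
    exact key2
  field_simp
  linear_combination (4 * r^(m+2) * jacobiP p ((k:ℝ)+1) ((m:ℝ)+1) y) * key2
end

section
/- The derivative at the boundary satisfies (d/dr) Q_n^{k,m}(r)|_{r=1} = ((2n(n+k+1) + m(2n+k+1))/(k+1)) · Q_n^{k,m}(1). -/
lemma hasDerivAt_jacobiP (n : ℕ) (a b x : ℝ) :
    HasDerivAt (jacobiP n a b)
      ((1 / 2 ^ n) * ∑ s ∈ Finset.range (n + 1),
        (Real.Gamma (a + n + 1) / (Real.Gamma (a + n - s + 1) * (Nat.factorial s))) *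
        (Real.Gamma (b + n + 1) / (Real.Gamma (b + s + 1) * (Nat.factorial (n - s)))) *
        (((n - s : ℕ) : ℝ) * (x - 1) ^ (n - s - 1) * (x + 1) ^ s
          + ((s : ℕ) : ℝ) * (x - 1) ^ (n - s) * (x + 1) ^ (s - 1))) x := by
  have h : HasDerivAt (fun y : ℝ => (2:ℝ)⁻¹ ^ n * ∑ s ∈ Finset.range (n + 1),
      (Real.Gamma (a + n + 1) / (Real.Gamma (a + n - s + 1) * (Nat.factorial s))) *
        (Real.Gamma (b + n + 1) / (Real.Gamma (b + s + 1) * (Nat.factorial (n - s)))) *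
        (y - 1) ^ (n - s) * (y + 1) ^ s)
      ((2:ℝ)⁻¹ ^ n * ∑ s ∈ Finset.range (n + 1),
        (((Real.Gamma (a + n + 1) / (Real.Gamma (a + n - s + 1) * (Nat.factorial s))) *
          (Real.Gamma (b + n + 1) / (Real.Gamma (b + s + 1) * (Nat.factorial (n - s)))) *
          (((n - s : ℕ) : ℝ) * (x - 1) ^ (n - s - 1) * 1)) * (x + 1) ^ s
         + ((Real.Gamma (a + n + 1) / (Real.Gamma (a + n - s + 1) * (Nat.factorial s))) *
          (Real.Gamma (b + n + 1) / (Real.Gamma (b + s + 1) * (Nat.factorial (n - s)))) *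
          (x - 1) ^ (n - s)) * (((s : ℕ) : ℝ) * (x + 1) ^ (s - 1) * 1))) x := by
    apply HasDerivAt.const_mul
    apply HasDerivAt.fun_sum
    intro s hs
    exact ((((hasDerivAt_id x).sub_const 1).pow _).const_mul _).mul
      (((hasDerivAt_id x).add_const 1).pow _)
  unfold jacobiP
  simp only [one_div, ← inv_pow] at h ⊢
  convert h using 2
  apply Finset.sum_congr rfl
  intro s hs
  ring

lemma jacobiP_nat_one (n k m : ℕ) :
    jacobiP n k m 1 = ((k + n).factorial : ℝ) / (k.factorial * n.factorial) := by
  unfold jacobiP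
  rw [Finset.sum_range_succ, Finset.sum_eq_zero (fun s hs => by
    rw [Finset.mem_range] at hs
    have : (1:ℝ) - 1 = 0 := by norm_num
    rw [this, zero_pow (Nat.sub_ne_zero_of_lt hs)]
    ring)]
  have h1 : ((k:ℝ) + n + 1) = ((k + n : ℕ) : ℝ) + 1 := by push_cast; ring
  have h2 : ((k:ℝ) + n - n + 1) = ((k : ℕ) : ℝ) + 1 := by push_cast; ring
  have h3 : ((m:ℝ) + n + 1) = ((m + n : ℕ) : ℝ) + 1 := by push_cast; ring
  rw [h1, h2, h3, Real.Gamma_nat_eq_factorial, Real.Gamma_nat_eq_factorial,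
    Real.Gamma_nat_eq_factorial]
  have hmn : ((m + n).factorial : ℝ) ≠ 0 := by positivity
  have hk : (k.factorial : ℝ) ≠ 0 := by positivity
  have hn : (n.factorial : ℝ) ≠ 0 := by positivity
  simp [Nat.sub_self]
  field_simp
  ring

lemma jacobiP_hasDerivAt_one (N k m : ℕ) :
    HasDerivAt (jacobiP (N + 1) k m)
      ((((k + (N + 1)).factorial : ℝ) * (m + (N + 1)).factorial /
          ((k + 1).factorial * N.factorial * (m + N).factorial)
        + ((N:ℝ) + 1) * ((k + (N + 1)).factorial / (k.factorial * (N + 1).factorial))) / 2) 1 := by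
  have h := hasDerivAt_jacobiP (N + 1) k m 1
  convert h using 1
  rw [Finset.sum_range_succ, Finset.sum_range_succ, Finset.sum_eq_zero (fun s hs => by
    rw [Finset.mem_range] at hs
    have e0 : (1:ℝ) - 1 = 0 := by norm_num
    have e1 : N + 1 - s - 1 ≠ 0 := by omega
    have e2 : N + 1 - s ≠ 0 := by omega
    rw [e0, zero_pow e1, zero_pow e2]
    ring)]
  have e0 : (1:ℝ) - 1 = 0 := by norm_num
  have eN : N + 1 - N = 1 := by omega
  rw [e0, eN]
  simp only [Nat.sub_self, pow_zero, pow_one, zero_pow (Nat.one_ne_zero)]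
  have g1 : ((k:ℝ) + ↑(N+1) + 1) = ((k + (N+1) : ℕ):ℝ) + 1 := by push_cast; ring
  have g2 : ((k:ℝ) + ↑(N+1) - ↑N + 1) = ((k+1:ℕ):ℝ) + 1 := by push_cast; ring
  have g3 : ((k:ℝ) + ↑(N+1) - ↑(N+1) + 1) = ((k:ℕ):ℝ) + 1 := by push_cast; ring
  have g4 : ((m:ℝ) + ↑(N+1) + 1) = ((m + (N+1) : ℕ):ℝ) + 1 := by push_cast; ring
  have g5 : ((m:ℝ) + ↑N + 1) = ((m+N:ℕ):ℝ) + 1 := by push_cast; ring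
  rw [g1, g2, g3, g4, g5, Real.Gamma_nat_eq_factorial, Real.Gamma_nat_eq_factorial,
    Real.Gamma_nat_eq_factorial, Real.Gamma_nat_eq_factorial, Real.Gamma_nat_eq_factorial]
  have e2 : ((1:ℝ) + 1) = 2 := by norm_num
  rw [e2]
  have hk : (k.factorial : ℝ) ≠ 0 := by positivity
  have hk1 : ((k+1).factorial : ℝ) ≠ 0 := by positivity
  have hN : (N.factorial : ℝ) ≠ 0 := by positivity
  have hN1 : ((N+1).factorial : ℝ) ≠ 0 := by positivity
  have hmN : ((m+N).factorial : ℝ) ≠ 0 := by positivity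
  have hmN1 : ((m+(N+1)).factorial : ℝ) ≠ 0 := by positivity
  simp only [Nat.factorial_one, Nat.factorial_zero, Nat.cast_one, mul_one]
  field_simp
  push_cast [Nat.add_sub_cancel, Nat.add_one_sub_one, Nat.add_sub_cancel_left]
  ring

lemma jacobiP_hasDerivAt_one_zero (k m : ℕ) : HasDerivAt (jacobiP 0 k m) 0 1 := by
  have h := hasDerivAt_jacobiP 0 k m 1
  convert h using 1
  simp

lemma Q_deriv_general (n k m : ℕ) (D : ℝ) (hD : HasDerivAt (jacobiP n k m) D 1) :
    deriv (Q n k m) 1 = ((m : ℝ) * jacobiP n k m 1 + D * 4) / Real.sqrt (Nnorm n k m) := by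
  have hg : HasDerivAt (fun r : ℝ => 2 * r ^ 2 - 1) 4 1 := by
    have := ((hasDerivAt_pow 2 (1:ℝ)).const_mul 2).sub_const 1
    norm_num at this
    exact this.sub_const 1
  have hD' : HasDerivAt (jacobiP n k m) D (2 * (1:ℝ) ^ 2 - 1) := by
    rw [show (2 * (1:ℝ) ^ 2 - 1) = 1 by norm_num]
    exact hD
  have hcomp : HasDerivAt (fun r : ℝ => jacobiP n k m (2 * r ^ 2 - 1)) (D * 4) 1 :=
    HasDerivAt.comp (h₂ := jacobiP n k m) (h := fun r : ℝ => 2 * r ^ 2 - 1) 1 hD' hg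
  have hQ : HasDerivAt (Q n k m)
      (((m : ℝ) * (1:ℝ) ^ (m - 1) * 1 * jacobiP n k m (2 * (1:ℝ) ^ 2 - 1) +
        (1:ℝ) ^ m * (D * 4)) / Real.sqrt (Nnorm n k m)) 1 := by
    unfold Q
    exact (((hasDerivAt_id (1:ℝ)).pow m).mul hcomp).div_const _
  rw [hQ.deriv]
  norm_num

theorem Q_deriv_at_one (k m n : ℕ) :
    deriv (Q n k m) 1 =
      ((2 * (n : ℝ) * (n + k + 1) + m * (2 * n + k + 1)) / (k + 1)) * Q n k m 1 := by
  have hQ1 : Q n k m 1 = jacobiP n k m 1 / Real.sqrt (Nnorm n k m) := by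
    unfold Q; norm_num
  have hk1 : ((k:ℝ) + 1) ≠ 0 := by positivity
  cases n with
  | zero =>
    rw [Q_deriv_general 0 k m 0 (jacobiP_hasDerivAt_one_zero k m), hQ1]
    have key : (m : ℝ) * jacobiP 0 k m 1 + 0 * 4 =
        ((2 * ((0:ℕ) : ℝ) * (((0:ℕ):ℝ) + k + 1) + m * (2 * ((0:ℕ):ℝ) + k + 1)) / (k + 1)) *
          jacobiP 0 k m 1 := by
      field_simp
      push_cast
      ring
    push_cast at key ⊢
    rw [key]
    ring
  | succ N =>
    rw [Q_deriv_general (N+1) k m _ (jacobiP_hasDerivAt_one N k m), hQ1, jacobiP_nat_one]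
    have f1 : ((k+1).factorial : ℝ) = (k+1) * k.factorial := by
      rw [Nat.factorial_succ]; push_cast; ring
    have f2 : ((N+1).factorial : ℝ) = (N+1) * N.factorial := by
      rw [Nat.factorial_succ]; push_cast; ring
    have f3 : ((m+(N+1)).factorial : ℝ) = (m+N+1) * (m+N).factorial := by
      rw [show m+(N+1) = (m+N)+1 from rfl, Nat.factorial_succ]; push_cast; ring
    have hk : (k.factorial : ℝ) ≠ 0 := by positivity
    have hN : (N.factorial : ℝ) ≠ 0 := by positivity
    have hmN : ((m+N).factorial : ℝ) ≠ 0 := by positivity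
    have hN1 : ((N:ℝ) + 1) ≠ 0 := by positivity
    have hmN1 : ((m:ℝ) + N + 1) ≠ 0 := by positivity
    have key : (m : ℝ) * (((k + (N+1)).factorial : ℝ) / (k.factorial * (N+1).factorial)) +
        ((((k + (N + 1)).factorial : ℝ) * (m + (N + 1)).factorial /
          ((k + 1).factorial * N.factorial * (m + N).factorial)
        + ((N:ℝ) + 1) * ((k + (N + 1)).factorial / (k.factorial * (N + 1).factorial))) / 2) * 4 =
        ((2 * (((N+1:ℕ)) : ℝ) * ((((N+1:ℕ)):ℝ) + k + 1) + m * (2 * (((N+1:ℕ)):ℝ) + k + 1)) / (k + 1)) *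
          (((k + (N+1)).factorial : ℝ) / (k.factorial * (N+1).factorial)) := by
      rw [f1, f2, f3]
      push_cast
      field_simp
      ring
    rw [key]
    ring
end
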